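/- Fix integers k ≥ 2 and U ≥ 1, and let φ_k be the unique real root greater than 1 of P_k(x) = x^k − x^{k−1} − ⋯ − x − 1. Then there exists a constant c > 0 such that the upper bound on the stream diffusion metric, N̄(t) = ∑_{j=1}^{U} S_k(t−j+1), satisfies N̄(t) − c·φ_k^t → −U/(k−1) as the integer t → ∞; that is, N̄(t) has the asymptotic closed form N̄(t) ≈ c·φ_k^t − U/(k−1). -/

import Mathlib

/-- Value of the k-step Fibonacci sequence at natural indices. -/
def FkNat (k : ℕ) : ℕ → ℕ
  | 0 => 0
  | 1 => 1
  | n + 2 => ∑ j ∈ Finset.range k, FkNat k (n + 1 - j)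
decreasing_by omega

/-- The k-step Fibonacci sequence `F_k : ℤ → ℕ`:
`F_k i = 0` for `i ≤ 0`, `F_k 1 = 1`, and `F_k i = ∑_{j=1}^{k} F_k (i - j)` for `i > 1`. -/
def Fk (k : ℕ) (i : ℤ) : ℕ := if i ≤ 0 then 0 else FkNat k i.toNat

/-- The k-step Fibonacci sum `S_k n = ∑_{i=1}^{n} F_k i` (zero for `n ≤ 0`). -/
noncomputable def Sk (k : ℕ) (n : ℤ) : ℕ := ∑ i ∈ Finset.Icc (1 : ℤ) n, Fk k i

open Filter

open Finset Polynomial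

set_option maxHeartbeats 1000000



lemma sum_Icc_int {M : Type*} [AddCommMonoid M] (k : ℕ) (f : ℤ → M) :
    ∑ j ∈ Finset.Icc (1:ℤ) (k:ℤ), f j = ∑ j ∈ Finset.range k, f (j+1) := by
  induction k with
  | zero => simp
  | succ k ih =>
    have h : Finset.Icc (1:ℤ) ((k:ℤ)+1) = insert ((k:ℤ)+1) (Finset.Icc (1:ℤ) (k:ℤ)) := by
      ext x; simp; omega
    rw [Finset.sum_range_succ, ← ih, show ((k+1:ℕ):ℤ) = (k:ℤ)+1 by push_cast; ring, h,
      Finset.sum_insert (by simp)]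
    ring_nf
    rw [add_comm]

lemma Fk_nonpos (k : ℕ) {i : ℤ} (hi : i ≤ 0) : Fk k i = 0 := if_pos hi

lemma Fk_natCast (k m : ℕ) : Fk k (m : ℤ) = FkNat k m := by
  rcases Nat.eq_zero_or_pos m with h | h
  · subst h; simp [Fk, FkNat]
  · rw [Fk, if_neg (by omega), Int.toNat_natCast]

lemma Fk_one (k : ℕ) : Fk k 1 = 1 := by
  have := Fk_natCast k 1; simpa [FkNat] using this

lemma Fk_rec (k : ℕ) {i : ℤ} (hi : 2 ≤ i) :
    Fk k i = ∑ j ∈ Finset.Icc (1:ℤ) (k:ℤ), Fk k (i - j) := by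
  obtain ⟨n, rfl⟩ : ∃ n : ℕ, i = (n:ℤ) + 2 := ⟨(i-2).toNat, by omega⟩
  rw [sum_Icc_int]
  have h1 : ((n:ℤ) + 2) = ((n+2 : ℕ) : ℤ) := by push_cast; ring
  rw [h1, Fk_natCast]
  rw [FkNat]
  apply Finset.sum_congr rfl
  intro j hj
  rcases le_or_gt (j : ℕ) (n+1) with h | h
  · have : ((n+2:ℕ):ℤ) - ((j:ℤ)+1) = ((n+1-j : ℕ) : ℤ) := by omega
    rw [this, Fk_natCast]
  · have h0 : n + 1 - j = 0 := by omega
    rw [h0, Fk_nonpos k (by push_cast; omega)]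
    simp [FkNat]

lemma Sk_nonpos (k : ℕ) {n : ℤ} (hn : n ≤ 0) : Sk k n = 0 := by
  rw [Sk, Finset.Icc_eq_empty (by omega), Finset.sum_empty]

lemma Sk_rec (k : ℕ) (n : ℤ) : Sk k n = Sk k (n-1) + Fk k n := by
  rcases le_or_gt n 0 with h | h
  · rw [Sk_nonpos k h, Sk_nonpos k (by omega), Fk_nonpos k h]
  · have hins : Finset.Icc (1:ℤ) n = insert n (Finset.Icc (1:ℤ) (n-1)) := by
      ext x; simp; omega
    rw [Sk, hins, Finset.sum_insert (by simp), Sk]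
    exact Nat.add_comm _ _

lemma Sk_key (k : ℕ) {n : ℤ} (hn : 1 ≤ n) :
    Sk k n = 1 + ∑ j ∈ Finset.Icc (1:ℤ) (k:ℤ), Sk k (n - j) := by
  obtain ⟨m, rfl⟩ : ∃ m : ℕ, n = 1 + (m:ℤ) := ⟨(n-1).toNat, by omega⟩
  clear hn
  induction m with
  | zero =>
    have h1 : Sk k 1 = 1 := by
      rw [Sk, Finset.Icc_self, Finset.sum_singleton, Fk_one]
    have : ∀ j ∈ Finset.Icc (1:ℤ) (k:ℤ), Sk k (1 - j) = 0 := by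
      intro j hj; simp at hj; exact Sk_nonpos k (by omega)
    simp only [Nat.cast_zero, add_zero]
    rw [h1, Finset.sum_congr rfl this]; simp
  | succ m ih =>
    have hc : (1:ℤ) + ((m+1:ℕ):ℤ) = (1 + (m:ℤ)) + 1 := by push_cast; ring
    rw [hc]
    set n : ℤ := 1 + (m:ℤ) with hn
    have h2 : Sk k (n+1) = Sk k n + Fk k (n+1) := by
      have := Sk_rec k (n+1); simpa using this
    rw [h2, ih, Fk_rec k (show (2:ℤ) ≤ n+1 by omega)]
    rw [add_assoc, ← Finset.sum_add_distrib]
    congr 1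
    apply Finset.sum_congr rfl
    intro j hj
    have := Sk_rec k (n+1-j)
    rw [show n + 1 - j - 1 = n - j by ring] at this
    rw [this]

lemma FkNat_pos (k : ℕ) (hk : 1 ≤ k) : ∀ n, 1 ≤ n → 1 ≤ FkNat k n := by
  intro n
  induction n using Nat.strong_induction_on with
  | _ n ih =>
    intro hn
    match n, hn with
    | 1, _ => simp [FkNat]
    | (m+2), _ =>
      rw [FkNat]
      calc 1 ≤ FkNat k (m+1-0) := by simpa using ih (m+1) (by omega) (by omega)
      _ ≤ _ := Finset.single_le_sum (f := fun j => FkNat k (m+1-j))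
          (fun i _ => Nat.zero_le _) (Finset.mem_range.mpr (by omega))

lemma Fk_le_Sk (k : ℕ) {n : ℤ} (hn : 1 ≤ n) : Fk k n ≤ Sk k n := by
  apply Finset.single_le_sum (f := fun i => Fk k i) (fun i _ => Nat.zero_le _)
  simp; omega

noncomputable def App (q : ℂ[X]) (u : ℕ → ℂ) (n : ℕ) : ℂ :=
  ∑ i ∈ Finset.range (q.natDegree + 1), q.coeff i * u (n + i)

lemma App_one (u : ℕ → ℂ) (n : ℕ) : App 1 u n = u n := by
  simp [App]

lemma App_linear_mul (q : ℂ[X]) (hq : q ≠ 0) (z : ℂ) (u : ℕ → ℂ) (n : ℕ) :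
    App ((X - C z) * q) u n = App q (fun m => u (m+1)) n - z * App q u n := by
  have hdeg : ((X - C z) * q).natDegree = q.natDegree + 1 := by
    rw [natDegree_mul (X_sub_C_ne_zero z) hq, natDegree_X_sub_C]; ring
  have hcoeff : ∀ m : ℕ, ((X - C z) * q).coeff m
      = (X * q).coeff m - z * q.coeff m := by
    intro m
    rw [sub_mul, coeff_sub, coeff_C_mul]
  rw [App, hdeg]
  have h1 : ∑ m ∈ Finset.range (q.natDegree + 2), ((X - C z) * q).coeff m * u (n + m)
      = (∑ m ∈ Finset.range (q.natDegree + 2), (X * q).coeff m * u (n + m))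
        - z * ∑ m ∈ Finset.range (q.natDegree + 2), q.coeff m * u (n + m) := by
    rw [Finset.mul_sum, ← Finset.sum_sub_distrib]
    exact Finset.sum_congr rfl (fun m _ => by rw [hcoeff m]; ring)
  rw [h1]
  congr 1
  · -- shift part
    rw [Finset.sum_range_succ'] -- splits off m = 0
    simp only [coeff_X_mul_zero, zero_mul, add_zero]
    rw [App]
    apply Finset.sum_congr rfl
    intro i _
    rw [coeff_X_mul, ← add_assoc]
  · -- plain part
    rw [Finset.sum_range_succ, coeff_natDegree_succ_eq_zero, zero_mul, add_zero, App]

lemma tendsto_zero_step {z : ℂ} (hz : ‖z‖ < 1) (u v : ℕ → ℂ)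
    (hv : ∀ n, v n = u (n+1) - z * u n) (hvt : Tendsto v atTop (nhds 0)) :
    Tendsto u atTop (nhds 0) := by
  rw [Metric.tendsto_atTop] at hvt ⊢
  intro ε hε
  set r := ‖z‖ with hr
  have hr0 : 0 ≤ r := norm_nonneg _
  have hr1 : 0 < 1 - r := by linarith
  obtain ⟨N, hN⟩ := hvt (ε * (1-r) / 3) (by positivity)
  have key : ∀ m : ℕ, ‖u (N + m)‖ ≤ r^m * ‖u N‖ + ε/3 := by
    intro m
    induction m with
    | zero => simp; positivity
    | succ m ih =>
      have hu : u (N + m + 1) = z * u (N + m) + v (N + m) := by rw [hv]; ring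
      have h1 : ‖u (N + (m+1))‖ ≤ r * ‖u (N+m)‖ + ε * (1-r)/3 := by
        rw [show N + (m+1) = N + m + 1 by ring, hu]
        calc ‖z * u (N+m) + v (N+m)‖
            ≤ ‖z * u (N+m)‖ + ‖v (N+m)‖ := norm_add_le _ _
          _ ≤ r * ‖u (N+m)‖ + ε * (1-r)/3 := by
              rw [norm_mul]
              have := hN (N+m) (by omega)
              rw [Complex.dist_eq, sub_zero] at this
              exact add_le_add le_rfl this.le
      calc ‖u (N + (m+1))‖
          ≤ r * ‖u (N+m)‖ + ε * (1-r)/3 := h1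
        _ ≤ r * (r^m * ‖u N‖ + ε/3) + ε * (1-r)/3 := by
            apply add_le_add_left
            exact mul_le_mul_of_nonneg_left ih hr0
        _ = r^(m+1) * ‖u N‖ + (r * ε/3 + ε * (1-r)/3) := by ring
        _ ≤ r^(m+1) * ‖u N‖ + ε/3 := by
            apply add_le_add_right
            nlinarith
  -- now pick M with r^M * |u N| < ε/3
  have hpow : Tendsto (fun m : ℕ => r^m * ‖u N‖) atTop (nhds 0) := by
    have := tendsto_pow_atTop_nhds_zero_of_lt_one hr0 (by linarith)
    simpa using this.mul_const (‖u N‖)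
  rw [Metric.tendsto_atTop] at hpow
  obtain ⟨M, hM⟩ := hpow (ε/3) (by positivity)
  refine ⟨N + M, fun n hn => ?_⟩
  rw [Complex.dist_eq, sub_zero]
  have hm : n = N + (n - N) := by omega
  have h2 : ‖u n‖ ≤ r^(n-N) * ‖u N‖ + ε/3 := by
    conv_lhs => rw [hm]
    exact key (n - N)
  have h3 : r^(n-N) * ‖u N‖ ≤ r^M * ‖u N‖ := by
    apply mul_le_mul_of_nonneg_right _ (norm_nonneg _)
    exact pow_le_pow_of_le_one hr0 (by linarith) (by omega)
  have h4 : r^M * ‖u N‖ < ε/3 := by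
    have := hM M le_rfl
    rw [Real.dist_eq, sub_zero, abs_of_nonneg (by positivity)] at this
    exact this
  calc ‖u n‖ ≤ r^(n-N) * ‖u N‖ + ε/3 := h2
    _ ≤ r^M * ‖u N‖ + ε/3 := by linarith
    _ < ε/3 + ε/3 := by linarith
    _ < ε := by linarith

lemma App_sub_smul (q : ℂ[X]) (u w : ℕ → ℂ) (z : ℂ) (n : ℕ) :
    App q (fun m => u m - z * w m) n = App q u n - z * App q w n := by
  simp only [App, Finset.mul_sum, ← Finset.sum_sub_distrib]
  exact Finset.sum_congr rfl (fun i _ => by ring)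

lemma tendsto_zero_of_app : ∀ d : ℕ, ∀ q : ℂ[X], q.Monic → q.natDegree = d →
    (∀ z : ℂ, q.eval z = 0 → ‖z‖ < 1) →
    ∀ u : ℕ → ℂ, ∀ T : ℕ, (∀ n, T ≤ n → App q u n = 0) →
    Tendsto u atTop (nhds 0) := by
  intro d
  induction d with
  | zero =>
    intro q hq hdeg _ u T hu
    have hq1 : q = 1 := hq.natDegree_eq_zero.mp hdeg
    subst hq1
    have : ∀ n, T ≤ n → u n = 0 := fun n hn => by
      have := hu n hn; rwa [App_one] at this
    apply Tendsto.congr' _ tendsto_const_nhds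
    filter_upwards [eventually_ge_atTop T] with n hn
    exact (this n hn).symm
  | succ d ih =>
    intro q hq hdeg hroots u T hu
    have hq0 : q ≠ 0 := hq.ne_zero
    obtain ⟨z, hz⟩ : ∃ z : ℂ, q.IsRoot z := by
      apply Complex.exists_root
      rw [degree_eq_natDegree hq0, hdeg]
      exact_mod_cast Nat.succ_pos d
    obtain ⟨q₁, hq₁⟩ : (X - C z) ∣ q := dvd_iff_isRoot.mpr hz
    have hq₁m : q₁.Monic := (monic_X_sub_C z).of_mul_monic_left (hq₁ ▸ hq)
    have hq₁0 : q₁ ≠ 0 := hq₁m.ne_zero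
    have hdeg₁ : q₁.natDegree = d := by
      have := hdeg
      rw [hq₁, natDegree_mul (X_sub_C_ne_zero z) hq₁0, natDegree_X_sub_C] at this
      omega
    have hzlt : ‖z‖ < 1 := hroots z (by rw [hq₁]; simp)
    have hroots₁ : ∀ w : ℂ, q₁.eval w = 0 → ‖w‖ < 1 := by
      intro w hw
      exact hroots w (by rw [hq₁, eval_mul, hw, mul_zero])
    set v : ℕ → ℂ := fun m => u (m+1) - z * u m with hv
    have happ : ∀ n, T ≤ n → App q₁ v n = 0 := by
      intro n hn
      have h1 : App q₁ v n = App q₁ (fun m => u (m+1)) n - z * App q₁ u n :=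
        App_sub_smul q₁ (fun m => u (m+1)) u z n
      rw [h1, ← App_linear_mul q₁ hq₁0 z u n, ← hq₁]
      exact hu n hn
    have hvt : Tendsto v atTop (nhds 0) := ih q₁ hq₁m hdeg₁ hroots₁ v T happ
    exact tendsto_zero_step hzlt u v (fun n => rfl) hvt

lemma App_def (q : ℂ[X]) (u : ℕ → ℂ) (n : ℕ) :
  App q u n = ∑ i ∈ Finset.range (q.natDegree + 1), q.coeff i * u (n + i) := rfl


section RealFacts
variable {k : ℕ} {φ : ℝ}

lemma phi_lt_two (hk : 2 ≤ k) (hφ : 1 < φ) (hsum : ∑ j ∈ Finset.range k, φ^j = φ^k) :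
    φ < 2 := by
  have hg : (∑ i ∈ Finset.range k, φ^i) * (φ - 1) = φ^k - 1 := geom_sum_mul φ k
  rw [hsum] at hg
  have hpos : (0:ℝ) < φ^k := by positivity
  nlinarith

/-- termwise comparison: for `0 ≤ r ≤ φ`, `r^k ≤ ∑_{j<k} r^j`. -/
lemma sum_ge_of_le (hk : 2 ≤ k) (hφ : 0 < φ) (hsum : ∑ j ∈ Finset.range k, φ^j = φ^k)
    {r : ℝ} (hr0 : 0 ≤ r) (hr : r ≤ φ) : r^k ≤ ∑ j ∈ Finset.range k, r^j := by
  have key : ∀ j ∈ Finset.range k, r^k * φ^j ≤ r^j * φ^k := by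
    intro j hj
    simp only [Finset.mem_range] at hj
    have h1 : r^(k-j) ≤ φ^(k-j) := pow_le_pow_left₀ hr0 hr _
    have e1 : r^k = r^j * r^(k-j) := by rw [← pow_add, show j+(k-j)=k by omega]
    have e2 : φ^k = φ^j * φ^(k-j) := by rw [← pow_add, show j+(k-j)=k by omega]
    calc r^k * φ^j = (r^j * φ^j) * r^(k-j) := by rw [e1]; ring
      _ ≤ (r^j * φ^j) * φ^(k-j) := by
          apply mul_le_mul_of_nonneg_left h1 (by positivity)
      _ = r^j * φ^k := by rw [e2]; ring
  have h2 : r^k * ∑ j ∈ Finset.range k, φ^j ≤ (∑ j ∈ Finset.range k, r^j) * φ^k := by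
    rw [Finset.mul_sum, Finset.sum_mul]
    exact Finset.sum_le_sum key
  rw [hsum] at h2
  have hpk : (0:ℝ) < φ^k := by positivity
  calc r^k = r^k * φ^k / φ^k := by field_simp
    _ ≤ (∑ j ∈ Finset.range k, r^j) * φ^k / φ^k := by
        apply div_le_div_of_nonneg_right h2 hpk.le
    _ = ∑ j ∈ Finset.range k, r^j := by field_simp

lemma sum_lt_of_gt (hk : 2 ≤ k) (hφ : 0 < φ) (hsum : ∑ j ∈ Finset.range k, φ^j = φ^k)
    {r : ℝ} (hr : φ < r) : ∑ j ∈ Finset.range k, r^j < r^k := by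
  have hr0 : 0 < r := lt_trans hφ hr
  have key : ∀ j ∈ Finset.range k, r^j * φ^k < r^k * φ^j := by
    intro j hj
    simp only [Finset.mem_range] at hj
    have h1 : φ^(k-j) < r^(k-j) := by
      apply pow_lt_pow_left₀ hr hφ.le
      omega
    have e1 : r^k = r^j * r^(k-j) := by rw [← pow_add, show j+(k-j)=k by omega]
    have e2 : φ^k = φ^j * φ^(k-j) := by rw [← pow_add, show j+(k-j)=k by omega]
    calc r^j * φ^k = (r^j * φ^j) * φ^(k-j) := by rw [e2]; ring
      _ < (r^j * φ^j) * r^(k-j) := by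
          apply mul_lt_mul_of_pos_left h1 (by positivity)
      _ = r^k * φ^j := by rw [e1]; ring
  have h2 : (∑ j ∈ Finset.range k, r^j) * φ^k < r^k * ∑ j ∈ Finset.range k, φ^j := by
    rw [Finset.mul_sum, Finset.sum_mul]
    apply Finset.sum_lt_sum_of_nonempty _ key
    exact Finset.nonempty_range_iff.mpr (by omega)
  rw [hsum] at h2
  have hpk : (0:ℝ) < φ^k := by positivity
  exact lt_of_mul_lt_mul_right h2 hpk.le

end RealFacts

lemma root_abs_lt_one (k : ℕ) (hk : 2 ≤ k) (φ : ℝ) (hφ : 1 < φ)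
    (hsum : ∑ j ∈ Finset.range k, φ^j = φ^k)
    (huniq : ∀ x : ℝ, 1 < x → x ^ k - ∑ j ∈ Finset.range k, x ^ j = 0 → x = φ)
    (z : ℂ) (hz : z^k = ∑ j ∈ Finset.range k, z^j) (hne : z ≠ (φ:ℂ)) :
    ‖z‖ < 1 := by
  by_contra hcon
  push_neg at hcon
  set r := ‖z‖ with hrdef
  have hφ0 : (0:ℝ) < φ := by linarith
  have hφ2 : φ < 2 := phi_lt_two hk hφ hsum
  -- Step 1 : r ≤ φ
  have hrφ : r ≤ φ := by
    by_contra hh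
    push_neg at hh
    have h1 : r^k ≤ ∑ j ∈ Finset.range k, r^j := by
      calc r^k = ‖z^k‖ := by rw [norm_pow]
        _ = ‖∑ j ∈ Finset.range k, z^j‖ := by rw [hz]
        _ ≤ ∑ j ∈ Finset.range k, ‖z^j‖ := by
            exact norm_sum_le _ _
        _ = ∑ j ∈ Finset.range k, r^j := by
            apply Finset.sum_congr rfl; intro j _; rw [norm_pow]
    exact absurd h1 (not_le.mpr (sum_lt_of_gt hk hφ0 hsum hh))
  -- Step 2 : z^k * (2 - z) = 1
  have hzk : z^k * (2 - z) = 1 := by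
    have hg : (∑ i ∈ Finset.range k, z^i) * (z - 1) = z^k - 1 := geom_sum_mul z k
    rw [← hz] at hg
    ring_nf at hg ⊢
    linear_combination -hg
  have hr1 : (1:ℝ) ≤ r := hcon
  -- |2 - z| value
  have habs : r^k * ‖2 - z‖ = 1 := by
    rw [← norm_pow, ← norm_mul, hzk, norm_one]
  rcases eq_or_ne z ((r:ℝ):ℂ) with hreal | hreal
  · -- z is a nonneg real
    rcases eq_or_lt_of_le hr1 with h1 | h1
    · -- r = 1, z = 1
      have hz1 : z = 1 := by rw [hreal, ← h1]; norm_num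
      rw [hz1] at hz
      simp only [one_pow, Finset.sum_const, Finset.card_range, nsmul_eq_mul, mul_one] at hz
      have : (k:ℕ) = 1 := by exact_mod_cast hz.symm
      omega
    · -- r > 1 real root, so r = φ, z = φ : contradiction
      have hzr : ((r:ℝ):ℂ)^k = ∑ j ∈ Finset.range k, ((r:ℝ):ℂ)^j := by rw [← hreal]; exact hz
      have hrr : r^k - ∑ j ∈ Finset.range k, r^j = 0 := by
        have : ((r^k - ∑ j ∈ Finset.range k, r^j : ℝ) : ℂ) = 0 := by
          push_cast
          rw [hzr]; ring
        exact_mod_cast this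
      have : r = φ := huniq r h1 hrr
      exact hne (by rw [hreal, this])
  · -- z not a nonneg real : Re z < r
    have hre : z.re < r := by
      rcases lt_or_eq_of_le (Complex.re_le_norm z) with h | h
      · exact h
      · exfalso
        apply hreal
        have him : z.im = 0 := by
          have h2 : r^2 = z.re^2 + z.im^2 := by
            rw [hrdef, Complex.sq_norm, Complex.normSq_apply]; ring
          nlinarith [sq_nonneg z.im]
        apply Complex.ext
        · simp [h, hrdef]
        · simp [him]
    -- |2 - z| > 2 - r
    have hgt : 2 - r < ‖2 - z‖ := by
      have hr2 : r^2 = z.re^2 + z.im^2 := by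
        rw [hrdef, Complex.sq_norm, Complex.normSq_apply]; ring
      have h2 : (‖2 - z‖)^2 = 4 - 4 * z.re + r^2 := by
        rw [Complex.sq_norm, Complex.normSq_apply]
        have e1 : Complex.re 2 = 2 := by norm_num
        have e2 : Complex.im 2 = 0 := by norm_num
        simp only [Complex.sub_re, Complex.sub_im, e1, e2]
        linarith [hr2]
      nlinarith [norm_nonneg (2 - z)]
    -- so 1 > r^k (2 - r)
    have hlt : r^k * (2 - r) < 1 := by
      calc r^k * (2-r) < r^k * ‖2 - z‖ := by
            apply mul_lt_mul_of_pos_left hgt (by positivity)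
        _ = 1 := habs
    -- but r^k (2 - r) ≥ 1 on [1, φ]
    have hge : 1 ≤ r^k * (2 - r) := by
      have hs : r^k ≤ ∑ j ∈ Finset.range k, r^j := sum_ge_of_le hk hφ0 hsum (by linarith) hrφ
      have hg : (∑ i ∈ Finset.range k, r^i) * (r - 1) = r^k - 1 := geom_sum_mul r k
      nlinarith [hg, hs, hr1]
    linarith

lemma real_asymp (φ : ℝ) (hφ : 1 < φ) (a : ℕ → ℝ)
    (hd : Tendsto (fun n => a (n+1) - φ * a n) atTop (nhds 0)) :
    ∃ c : ℝ, Tendsto (fun t => a t / φ^t) atTop (nhds c) ∧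
      Tendsto (fun t => a t - c * φ^t) atTop (nhds 0) := by
  have hφ0 : (0:ℝ) < φ := by linarith
  set d : ℕ → ℝ := fun n => a (n+1) - φ * a n with hddef
  set g : ℕ → ℝ := fun n => a n / φ^n with hgdef
  have hg : ∀ n, g (n+1) - g n = d n / φ^(n+1) := by
    intro n
    show a (n+1) / φ^(n+1) - a n / φ^n = (a (n+1) - φ * a n) / φ^(n+1)
    rw [pow_succ]
    field_simp
  -- uniform bound on d
  obtain ⟨N₀, hN₀⟩ := (Metric.tendsto_atTop.mp hd) 1 one_pos
  set M : ℝ := 1 + ∑ i ∈ Finset.range N₀, |d i| with hMdef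
  have hM : ∀ n, |d n| ≤ M := by
    intro n
    rcases lt_or_ge n N₀ with h | h
    · have h1 : |d n| ≤ ∑ i ∈ Finset.range N₀, |d i| :=
        Finset.single_le_sum (f := fun i => |d i|) (fun i _ => abs_nonneg _)
          (Finset.mem_range.mpr h)
      linarith
    · have := hN₀ n h
      rw [Real.dist_eq, sub_zero] at this
      have h2 : (0:ℝ) ≤ ∑ i ∈ Finset.range N₀, |d i| :=
        Finset.sum_nonneg (fun i _ => abs_nonneg _)
      linarith
  have hM0 : 0 ≤ M := le_trans (abs_nonneg _) (hM 0)
  -- the distance weights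
  set w : ℕ → ℝ := fun n => |d n| / φ^(n+1) with hwdef
  have hw0 : ∀ n, 0 ≤ w n := fun n => by positivity
  have hgeo : Summable (fun n : ℕ => (1/φ)^n) :=
    summable_geometric_of_lt_one (by positivity) (by rw [div_lt_one hφ0]; linarith)
  have hwle : ∀ n, w n ≤ (M/φ) * (1/φ)^n := by
    intro n
    have h2 : (M/φ) * (1/φ)^n = M / φ^(n+1) := by
      rw [div_pow, one_pow, pow_succ]
      rw [div_mul_div_comm]
      ring
    rw [h2]
    exact div_le_div_of_nonneg_right (hM n) (by positivity)
  have hw : Summable w := by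
    apply Summable.of_nonneg_of_le hw0 hwle
    exact hgeo.mul_left _
  have hdist : ∀ n, dist (g n) (g (n+1)) ≤ w n := by
    intro n
    rw [dist_comm, Real.dist_eq, hg n]
    rw [abs_div, abs_of_pos (by positivity : (0:ℝ) < φ^(n+1))]
  have hcauchy : CauchySeq g := cauchySeq_of_dist_le_of_summable w hdist hw
  obtain ⟨c, hc⟩ := cauchySeq_tendsto_of_complete hcauchy
  refine ⟨c, hc, ?_⟩
  have htail : ∀ n, dist (g n) c ≤ ∑' m, w (n + m) :=
    dist_le_tsum_of_dist_le_of_tendsto w hdist hw hc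
  rw [Metric.tendsto_atTop]
  intro ε hε
  have hδ : (0:ℝ) < ε * (φ - 1) / 2 := by
    apply div_pos _ two_pos
    apply mul_pos hε
    linarith
  obtain ⟨N₁, hN₁⟩ := (Metric.tendsto_atTop.mp hd) (ε * (φ-1)/2) hδ
  refine ⟨N₁, fun t ht => ?_⟩
  rw [Real.dist_eq, sub_zero]
  have hphit : (0:ℝ) < φ^t := by positivity
  have key : a t - c * φ^t = φ^t * (g t - c) := by
    show _ = φ^t * (a t / φ^t - c)
    field_simp
  rw [key, abs_mul, abs_of_pos hphit]
  have h1 : |g t - c| ≤ ∑' m, w (t + m) := by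
    have := htail t
    rwa [Real.dist_eq] at this
  have hsum1 : Summable (fun m => w (t + m)) := by
    have := (summable_nat_add_iff t).mpr hw
    apply this.congr
    intro m; rw [Nat.add_comm]
  have h2 : φ^t * |g t - c| ≤ ∑' m, φ^t * w (t + m) := by
    have e : ∑' m, φ^t * w (t + m) = φ^t * ∑' m, w (t + m) := tsum_mul_left
    rw [e]
    exact mul_le_mul_of_nonneg_left h1 hphit.le
  have h3 : ∀ m : ℕ, φ^t * w (t + m) ≤ (ε * (φ-1)/2) * ((1/φ) * (1/φ)^m) := by
    intro m
    have hda : |d (t+m)| ≤ ε * (φ-1)/2 := by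
      have := hN₁ (t+m) (by omega)
      rw [Real.dist_eq, sub_zero] at this
      exact this.le
    have he : φ^t * w (t+m) = |d (t+m)| * ((1/φ) * (1/φ)^m) := by
      show φ^t * (|d (t+m)| / φ^(t+m+1)) = _
      rw [show t+m+1 = t + (m+1) by ring, pow_add, pow_succ, div_pow, one_pow]
      field_simp
    rw [he]
    apply mul_le_mul_of_nonneg_right hda (by positivity)
  have hsum3 : Summable (fun m : ℕ => (ε * (φ-1)/2) * ((1/φ) * (1/φ)^m)) := by
    exact (hgeo.mul_left _).mul_left _
  have h4 : ∑' m, φ^t * w (t + m) ≤ ∑' m, (ε * (φ-1)/2) * ((1/φ) * (1/φ)^m) := by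
    exact Summable.tsum_le_tsum h3 (hsum1.mul_left _) hsum3
  have h5 : ∑' m : ℕ, (ε * (φ-1)/2) * ((1/φ) * (1/φ)^m) = ε/2 := by
    rw [tsum_mul_left, tsum_mul_left, tsum_geometric_of_lt_one (by positivity)
      (by rw [div_lt_one hφ0]; linarith)]
    have e : (1:ℝ) - 1/φ = (φ-1)/φ := by field_simp
    have hne : φ - 1 ≠ 0 := by linarith
    rw [e, inv_div]
    field_simp
  calc φ^t * |g t - c| ≤ ∑' m, φ^t * w (t + m) := h2
    _ ≤ ∑' m, (ε * (φ-1)/2) * ((1/φ) * (1/φ)^m) := h4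
    _ = ε/2 := h5
    _ < ε := by linarith

lemma seq_asymp (k : ℕ) (hk : 2 ≤ k) (φ : ℝ) (hφ : 1 < φ)
    (hsum : ∑ j ∈ Finset.range k, φ^j = φ^k)
    (huniq : ∀ x : ℝ, 1 < x → x ^ k - ∑ j ∈ Finset.range k, x ^ j = 0 → x = φ)
    (b : ℕ → ℝ) (T : ℕ) (hb : ∀ n, T ≤ n → b (n+k) = ∑ i ∈ Finset.range k, b (n+i)) :
    ∃ c : ℝ, Tendsto (fun t => b t / φ^t) atTop (nhds c) ∧
      Tendsto (fun t => b t - c * φ^t) atTop (nhds 0) := by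
  set Pc : ℂ[X] := X^k - ∑ j ∈ Finset.range k, (X:ℂ[X])^j with hPc
  have hsdeg : (∑ j ∈ Finset.range k, (X:ℂ[X])^j).degree ≤ ((k-1 : ℕ) : WithBot ℕ) := by
    apply le_trans (Polynomial.degree_sum_le _ _)
    apply Finset.sup_le
    intro j hj
    rw [Polynomial.degree_X_pow]
    exact_mod_cast Nat.le_sub_one_of_lt (Finset.mem_range.mp hj)
  have hsdeg_lt : (∑ j ∈ Finset.range k, (X:ℂ[X])^j).degree < (k : WithBot ℕ) :=
    lt_of_le_of_lt hsdeg (by exact_mod_cast Nat.sub_lt (by omega) one_pos)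
  have hPm : Pc.Monic := Polynomial.monic_X_pow_sub hsdeg_lt
  have hPdeg : Pc.natDegree = k := by
    have hdeg : Pc.degree = (k : WithBot ℕ) := by
      rw [hPc]
      rw [Polynomial.degree_sub_eq_left_of_degree_lt]
      · exact Polynomial.degree_X_pow k
      · rw [Polynomial.degree_X_pow]
        exact hsdeg_lt
    exact Polynomial.natDegree_eq_of_degree_eq_some hdeg
  have hPeval : ∀ z : ℂ, Pc.eval z = z^k - ∑ j ∈ Finset.range k, z^j := by
    intro z
    simp [hPc, Polynomial.eval_finset_sum]
  have hPapp : ∀ u : ℕ → ℂ, ∀ n : ℕ,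
      App Pc u n = u (n+k) - ∑ i ∈ Finset.range k, u (n+i) := by
    intro u n
    rw [App_def, hPdeg, Finset.sum_range_succ]
    have hck : Pc.coeff k = 1 := by
      simp [hPc, Polynomial.coeff_X_pow, Finset.sum_ite_eq]
    have hci : ∀ i ∈ Finset.range k, Pc.coeff i = -1 := by
      intro i hi
      simp only [Finset.mem_range] at hi
      simp [hPc, Polynomial.coeff_X_pow, Finset.sum_ite_eq, hi]
      omega
    rw [hck, one_mul]
    rw [Finset.sum_congr rfl (fun i hi => by rw [hci i hi])]
    have : ∑ i ∈ Finset.range k, -1 * u (n+i) = - ∑ i ∈ Finset.range k, u (n+i) := by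
      rw [← Finset.sum_neg_distrib]
      exact Finset.sum_congr rfl (fun i _ => by ring)
    rw [this]; ring
  set φc : ℂ := (φ : ℂ) with hφc
  have hPφ : Pc.eval φc = 0 := by
    rw [hPeval]
    have : ((φ^k - ∑ j ∈ Finset.range k, φ^j : ℝ) : ℂ) = 0 := by
      rw [hsum]; simp
    push_cast at this
    convert this using 2
  obtain ⟨Q, hQ⟩ : (X - C φc) ∣ Pc := Polynomial.dvd_iff_isRoot.mpr hPφ
  have hQm : Q.Monic := (Polynomial.monic_X_sub_C φc).of_mul_monic_left (hQ ▸ hPm)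
  have hQ0 : Q ≠ 0 := hQm.ne_zero
  have hQdeg : Q.natDegree = k - 1 := by
    have := hPdeg
    rw [hQ, Polynomial.natDegree_mul (Polynomial.X_sub_C_ne_zero φc) hQ0,
      Polynomial.natDegree_X_sub_C] at this
    omega
  -- Q φc ≠ 0
  have hφ2 : φ < 2 := phi_lt_two hk hφ hsum
  have hQφ : Q.eval φc ≠ 0 := by
    have hder : (Polynomial.derivative Pc).eval φc = Q.eval φc := by
      rw [hQ, Polynomial.derivative_mul, Polynomial.derivative_X_sub_C]
      simp
    set D : ℝ := (k:ℝ)*φ^(k-1) - ∑ j ∈ Finset.range k, (j:ℝ)*φ^(j-1) with hD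
    have hderval : (Polynomial.derivative Pc).eval φc = ((D : ℝ) : ℂ) := by
      rw [hPc]
      rw [Polynomial.derivative_sub, Polynomial.derivative_X_pow, Polynomial.derivative_sum]
      simp only [Polynomial.derivative_X_pow]
      simp [Polynomial.eval_finset_sum, hD, hφc]

    have hDpos : 0 < D := by
      have hφ0 : (0:ℝ) < φ := by linarith
      have hmul : D * φ = (k:ℝ)*φ^k - ∑ j ∈ Finset.range k, (j:ℝ)*φ^j := by
        rw [hD, sub_mul, Finset.sum_mul]
        congr 1
        · rw [mul_assoc, ← pow_succ, show k - 1 + 1 = k by omega]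
        · apply Finset.sum_congr rfl
          intro j hj
          match j with
          | 0 => simp
          | (i+1) =>
            rw [mul_assoc, ← pow_succ]
            norm_num
      have hsb : ∑ j ∈ Finset.range k, (j:ℝ)*φ^j ≤ (k-1:ℝ) * φ^k := by
        calc ∑ j ∈ Finset.range k, (j:ℝ)*φ^j
            ≤ ∑ j ∈ Finset.range k, (k-1:ℝ)*φ^j := by
              apply Finset.sum_le_sum
              intro j hj
              simp only [Finset.mem_range] at hj
              apply mul_le_mul_of_nonneg_right _ (by positivity)
              have : (j:ℝ) ≤ (k:ℝ) - 1 := by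
                have : (j:ℝ) + 1 ≤ (k:ℝ) := by exact_mod_cast hj
                linarith
              exact this
          _ = (k-1:ℝ) * ∑ j ∈ Finset.range k, φ^j := by rw [Finset.mul_sum]
          _ = (k-1:ℝ) * φ^k := by rw [hsum]
      have hmulpos : 0 < D * φ := by
        rw [hmul]
        have : (0:ℝ) < φ^k := by positivity
        nlinarith
      nlinarith [hmulpos, hφ0]
    rw [← hder, hderval]
    exact Complex.ofReal_ne_zero.mpr hDpos.ne'
  have hQroots : ∀ z : ℂ, Q.eval z = 0 → ‖z‖ < 1 := by
    intro z hzero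
    have hPz : Pc.eval z = 0 := by rw [hQ, Polynomial.eval_mul, hzero, mul_zero]
    have hzk : z^k = ∑ j ∈ Finset.range k, z^j := by
      rw [hPeval z] at hPz
      exact sub_eq_zero.mp hPz
    have hzφ : z ≠ φc := fun h => hQφ (h ▸ hzero)
    exact root_abs_lt_one k hk φ hφ hsum huniq z hzk hzφ
  set bc : ℕ → ℂ := fun n => ((b n : ℝ) : ℂ) with hbc
  have hAppP : ∀ n, T ≤ n → App Pc bc n = 0 := by
    intro n hn
    rw [hPapp]
    have h1 := hb n hn
    have h2 : bc (n+k) = ∑ i ∈ Finset.range k, bc (n+i) := by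
      rw [hbc]
      push_cast
      exact_mod_cast congrArg (fun x : ℝ => (x : ℂ)) h1
    rw [h2, sub_self]
  set dc : ℕ → ℂ := fun n => bc (n+1) - φc * bc n with hdcdef
  have hAppQ : ∀ n, T ≤ n → App Q dc n = 0 := by
    intro n hn
    have h1 : App Q dc n = App Q (fun m => bc (m+1)) n - φc * App Q bc n :=
      App_sub_smul Q (fun m => bc (m+1)) bc φc n
    rw [h1, ← App_linear_mul Q hQ0 φc bc n, ← hQ]
    exact hAppP n hn
  have hdc : Tendsto dc atTop (nhds 0) :=
    tendsto_zero_of_app (k-1) Q hQm hQdeg hQroots dc T hAppQ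
  have hdr : Tendsto (fun n => b (n+1) - φ * b n) atTop (nhds 0) := by
    have hre : Tendsto (fun n => (dc n).re) atTop (nhds ((0:ℂ).re)) :=
      (Complex.continuous_re.tendsto 0).comp hdc
    simp only [Complex.zero_re] at hre
    apply hre.congr
    intro n
    show (dc n).re = _
    rw [hdcdef]
    simp [hbc, hφc]
  exact real_asymp φ hφ b hdr

/-- Asymptotic closed form for the upper bound on the stream diffusion metric:
if `φ_k` is the unique real root greater than 1 of `P_k(x) = x^k - x^(k-1) - ⋯ - x - 1`,
then there is a constant `c > 0` such that
`N̄(t) = ∑_{j=1}^{U} S_k (t - j + 1)` satisfies `N̄(t) - c φ_k^t → -U/(k-1)`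
as `t → ∞`; that is, `N̄(t) ≈ c φ_k^t - U/(k-1)`. -/
theorem stream_diffusion_bound_asymptotics
    (k U : ℕ) (hk : 2 ≤ k) (hU : 1 ≤ U) (φ : ℝ) (hφ : 1 < φ)
    (hroot : φ ^ k - ∑ j ∈ Finset.range k, φ ^ j = 0)
    (huniq : ∀ x : ℝ, 1 < x → x ^ k - ∑ j ∈ Finset.range k, x ^ j = 0 → x = φ) :
    ∃ c : ℝ, 0 < c ∧
      Tendsto
        (fun t : ℕ => ((∑ j ∈ Finset.Icc 1 U, Sk k ((t : ℤ) - (j : ℤ) + 1) : ℕ) : ℝ)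
          - c * φ ^ t)
        atTop (nhds (-(U : ℝ) / ((k : ℝ) - 1))) := by
  have hφ0 : (0:ℝ) < φ := by linarith
  have hk1 : (1:ℝ) < (k:ℝ) := by exact_mod_cast hk.trans_lt' one_lt_two
  set β : ℝ := ((k:ℝ) - 1)⁻¹ with hβ
  have hβ0 : 0 < β := by rw [hβ]; exact inv_pos.mpr (by linarith)
  have hβ1 : ((k:ℝ)-1)*β = 1 := mul_inv_cancel₀ (by linarith)
  have hβk : 1 + β = (k:ℝ) * β := by linear_combination -hβ1
  have hsum : ∑ j ∈ Finset.range k, φ^j = φ^k := (sub_eq_zero.mp hroot).symm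
  set b : ℕ → ℝ := fun t => (∑ j ∈ Finset.Icc 1 U, (Sk k ((t:ℤ) - (j:ℤ) + 1) : ℝ))
      + U * β with hb
  -- the recurrence
  have hrec : ∀ n : ℕ, U ≤ n → b (n+k) = ∑ i ∈ Finset.range k, b (n+i) := by
    intro n hn
    have hterm : ∀ j ∈ Finset.Icc 1 U,
        (Sk k (((n+k:ℕ):ℤ) - (j:ℤ) + 1) : ℝ)
          = 1 + ∑ i ∈ Finset.range k, (Sk k (((n+i:ℕ):ℤ) - (j:ℤ) + 1) : ℝ) := by
      intro j hj
      simp only [Finset.mem_Icc] at hj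
      have hm : (1:ℤ) ≤ ((n+k:ℕ):ℤ) - (j:ℤ) + 1 := by push_cast; omega
      have h1 := Sk_key k hm
      have h2 : (Sk k (((n+k:ℕ):ℤ) - (j:ℤ) + 1) : ℝ)
          = 1 + ∑ i ∈ Finset.Icc (1:ℤ) (k:ℤ),
              (Sk k (((n+k:ℕ):ℤ) - (j:ℤ) + 1 - i) : ℝ) := by
        rw [h1]; push_cast [Nat.cast_sum]; ring
      rw [h2]
      congr 1
      rw [sum_Icc_int k (fun i => (Sk k (((n+k:ℕ):ℤ) - (j:ℤ) + 1 - i) : ℝ))]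
      rw [← Finset.sum_range_reflect]
      apply Finset.sum_congr rfl
      intro i hi
      simp only [Finset.mem_range] at hi
      congr 2
      push_cast
      omega
    have hL : b (n+k) = (U:ℝ) + (∑ j ∈ Finset.Icc 1 U,
        ∑ i ∈ Finset.range k, (Sk k (((n+i:ℕ):ℤ) - (j:ℤ) + 1) : ℝ)) + U * β := by
      rw [hb]
      simp only
      rw [Finset.sum_congr rfl hterm, Finset.sum_add_distrib]
      simp [Nat.card_Icc]
    have hR : ∑ i ∈ Finset.range k, b (n+i)
        = (∑ j ∈ Finset.Icc 1 U,
            ∑ i ∈ Finset.range k, (Sk k (((n+i:ℕ):ℤ) - (j:ℤ) + 1) : ℝ))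
          + (k:ℝ) * (U * β) := by
      rw [hb]
      simp only
      rw [Finset.sum_add_distrib, Finset.sum_comm]
      simp [Finset.sum_const]
    rw [hL, hR]
    have : (U:ℝ) + U * β = (k:ℝ) * (U * β) := by
      have : (U:ℝ) * (1 + β) = (U:ℝ) * ((k:ℝ)*β) := by rw [hβk]
      nlinarith [this]
    linarith
  obtain ⟨c, hc1, hc2⟩ := seq_asymp k hk φ hφ hsum huniq b U hrec
  -- positivity of c
  have hkk : 1 ≤ k := by omega
  have hne : (Finset.Icc 2 (k+1)).Nonempty := ⟨2, by simp; omega⟩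
  set A : ℝ := (Finset.Icc 2 (k+1)).inf' hne (fun n => (FkNat k n : ℝ) / φ^n) with hA
  have hApos : 0 < A := by
    rw [hA, Finset.lt_inf'_iff]
    intro i hi
    simp only [Finset.mem_Icc] at hi
    have h1 : 1 ≤ FkNat k i := FkNat_pos k hkk i (by omega)
    have : (0:ℝ) < FkNat k i := by exact_mod_cast Nat.lt_of_lt_of_le Nat.zero_lt_one h1
    positivity
  have hAle : ∀ n : ℕ, 2 ≤ n → A * φ^n ≤ (FkNat k n : ℝ) := by
    intro n
    induction n using Nat.strong_induction_on with
    | _ n ih =>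
      intro hn
      rcases le_or_gt n (k+1) with h | h
      · have h1 : A ≤ (FkNat k n : ℝ) / φ^n := by
          rw [hA]
          exact Finset.inf'_le _ (Finset.mem_Icc.mpr ⟨hn, h⟩)
        rw [← le_div_iff₀ (by positivity)] at *
        exact h1
      · obtain ⟨m, rfl⟩ : ∃ m, n = m + 2 := ⟨n - 2, by omega⟩
        have hFm : FkNat k (m+2) = ∑ j ∈ Finset.range k, FkNat k (m + 1 - j) := by
          rw [FkNat]
        have hsum2 : ∑ j ∈ Finset.range k, A * φ^(m+1-j) ≤
            ∑ j ∈ Finset.range k, (FkNat k (m+1-j) : ℝ) := by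
          apply Finset.sum_le_sum
          intro j hj
          simp only [Finset.mem_range] at hj
          exact ih (m+1-j) (by omega) (by omega)
        have hgeom : ∑ j ∈ Finset.range k, A * φ^(m+1-j) = A * φ^(m+2) := by
          rw [← Finset.mul_sum]
          congr 1
          rw [← Finset.sum_range_reflect]
          have he : ∀ j ∈ Finset.range k, φ^(m+1-(k-1-j)) = φ^(m+2-k) * φ^j := by
            intro j hj
            simp only [Finset.mem_range] at hj
            rw [← pow_add]
            congr 1
            omega
          rw [Finset.sum_congr rfl he, ← Finset.mul_sum, hsum, ← pow_add,
            show m+2-k+k = m+2 by omega]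
        rw [← hgeom, hFm]
        push_cast [Nat.cast_sum]
        exact hsum2
  have hcpos : 0 < c := by
    set A' : ℝ := A * φ / φ^U with hA'
    have hA'pos : 0 < A' := by positivity
    have hlow : ∀ t : ℕ, U + 1 ≤ t → A' ≤ b t / φ^t := by
      intro t ht
      have hidx : ((t:ℤ) - (U:ℤ) + 1) = ((t + 1 - U : ℕ) : ℤ) := by push_cast; omega
      have h1 : A * φ^(t+1-U) ≤ (FkNat k (t+1-U) : ℝ) := hAle _ (by omega)
      have h2 : (FkNat k (t+1-U) : ℝ) ≤ (Sk k ((t:ℤ) - (U:ℤ) + 1) : ℝ) := by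
        have h3 : Fk k ((t:ℤ) - (U:ℤ) + 1) ≤ Sk k ((t:ℤ) - (U:ℤ) + 1) :=
          Fk_le_Sk k (by omega)
        have h4 : Fk k ((t:ℤ) - (U:ℤ) + 1) = FkNat k (t+1-U) := by
          rw [hidx]
          rw [Fk, if_neg (by omega), Int.toNat_natCast]
        rw [← h4]
        exact_mod_cast h3
      have h5 : (Sk k ((t:ℤ) - (U:ℤ) + 1) : ℝ) ≤ b t := by
        rw [hb]
        simp only
        have h6 : (Sk k ((t:ℤ) - (U:ℤ) + 1) : ℝ)
            ≤ ∑ j ∈ Finset.Icc 1 U, (Sk k ((t:ℤ) - (j:ℤ) + 1) : ℝ) :=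
          Finset.single_le_sum (f := fun j : ℕ => (Sk k ((t:ℤ) - (j:ℤ) + 1) : ℝ))
            (fun i _ => by positivity) (Finset.mem_Icc.mpr ⟨hU, le_rfl⟩)
        nlinarith [mul_pos (show (0:ℝ) < (U:ℝ) by exact_mod_cast hU) hβ0]
      have h7 : A' * φ^t = A * φ^(t+1-U) := by
        rw [hA', div_mul_eq_mul_div, div_eq_iff (by positivity), mul_assoc, mul_assoc,
          ← pow_succ', ← pow_add]
        congr 2
        omega
      rw [le_div_iff₀ (by positivity), h7]
      linarith
    apply lt_of_lt_of_le hA'pos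
    apply ge_of_tendsto hc1
    filter_upwards [eventually_ge_atTop (U+1)] with t ht
    exact hlow t ht
  refine ⟨c, hcpos, ?_⟩
  have hfin : Tendsto (fun t : ℕ => (b t - c * φ^t) - U * β) atTop (nhds (0 - U * β)) :=
    hc2.sub_const _
  rw [zero_sub] at hfin
  have heq : ∀ t : ℕ, ((∑ j ∈ Finset.Icc 1 U, Sk k ((t : ℤ) - (j : ℤ) + 1) : ℕ) : ℝ)
      - c * φ ^ t = (b t - c * φ^t) - U * β := by
    intro t
    rw [hb]
    push_cast [Nat.cast_sum]
    ring
  have hval : -(U * β) = -(U : ℝ) / ((k : ℝ) - 1) := by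
    rw [hβ]
    field_simp
  rw [← hval]
  apply Tendsto.congr _ hfin
  intro t
  rw [heq t]
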